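/- There exists a constant c ≤ 220 (independent of p) such that: if (X_n) is a nonnegative submartingale on a probability space with respect to a filtration (F_n), p ∈ [1,∞), and K ≥ 1 satisfies sup_{n∈ℕ} ‖X_n‖_p < K, then φ_p(λ, ε) := (cK²/(λε²)) · (2/λ)^{1/p} is a learnable rate of uniform convergence for (X_n): for all λ, ε ∈ (0,1) and all naturals a_0 < b_0 ≤ a_1 < b_1 ≤ …, there exists n ≤ φ_p(λ, ε) with P(∃ i, j ∈ [a_n, b_n] with |X_i − X_j| ≥ ε) < λ. Moreover, if instead sup_{n∈ℕ} ‖X_n‖_∞ < K, then φ_∞(λ, ε) := cK²/(λε²) is a learnable rate of uniform convergence. -/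

import Mathlib

open MeasureTheory ENNReal

namespace Stmt15Aux

variable {Ω : Type}

lemma wbmono {a b : ℕ → ℕ} (hab : ∀ n, a n < b n) (hba : ∀ n, b n ≤ a (n+1)) :
    Monotone b :=
  monotone_nat_of_le_succ fun n => (hba n).trans (hab (n+1)).le

lemma wba {a b : ℕ → ℕ} (hab : ∀ n, a n < b n) (hba : ∀ n, b n ≤ a (n+1)) :
    ∀ {m n}, m < n → b m ≤ a n := by
  intro m n h
  have : Monotone a := monotone_nat_of_le_succ fun n => (hab n).le.trans (hba n)
  exact (hba m).trans (this h)

lemma card_up_le {f : ℕ → Ω → ℝ} {ω : Ω} {α β : ℝ} (hαβ : α < β) {a b : ℕ → ℕ}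
    (hab : ∀ n, a n < b n) (hba : ∀ n, b n ≤ a (n+1)) {N : ℕ} {S : Finset ℕ}
    (hS : S ⊆ Finset.range N)
    (h : ∀ n ∈ S, ∃ i j, a n ≤ i ∧ i ≤ j ∧ j ≤ b n ∧ f i ω < α ∧ β < f j ω) :
    S.card ≤ upcrossingsBefore α β f (b (N-1) + 1) ω := by
  classical
  set u : ℕ → ℕ := fun T => upcrossingsBefore α β f T ω with hu
  have humono : Monotone u := fun s t hst => (upcrossingsBefore_mono hαβ hst) ω
  choose! i j h1 h2 h3 h4 h5 using h
  -- strict increase within each window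
  have key : ∀ n ∈ S, u (i n) < u (j n + 1) := fun n hn =>
    upcrossingsBefore_lt_of_exists_upcrossing hαβ le_rfl (h4 n hn) (h2 n hn) (h5 n hn)
  -- ordering between windows
  have horder : ∀ m ∈ S, ∀ n ∈ S, m < n → j m + 1 ≤ i n := by
    intro m hm n hn hmn
    have h6 : j m ≤ i n := ((h3 m hm).trans (wba hab hba hmn)).trans (h1 n hn)
    rcases eq_or_lt_of_le h6 with h7 | h7
    · exfalso
      have := h5 m hm
      rw [h7] at this
      exact absurd (h4 n hn) (not_lt.2 (hαβ.le.trans this.le))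
    · exact h7
  have hmonoS : ∀ m ∈ S, ∀ n ∈ S, m < n → u (i m) < u (i n) := by
    intro m hm n hn hmn
    exact lt_of_lt_of_le (key m hm) (humono (horder m hm n hn hmn))
  have htop : ∀ n ∈ S, u (i n) < u (b (N-1) + 1) := by
    intro n hn
    have hnN : n ≤ N - 1 := by
      have := Finset.mem_range.1 (hS hn); omega
    exact lt_of_lt_of_le (key n hn)
      (humono (Nat.succ_le_succ ((h3 n hn).trans (wbmono hab hba hnN))))
  calc S.card ≤ (Finset.range (u (b (N-1) + 1))).card := by
        refine Finset.card_le_card_of_injOn (fun n => u (i n))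
          (fun n hn => Finset.mem_range.2 (htop n hn)) ?_
        intro m hm n hn heq
        rcases lt_trichotomy m n with h | h | h
        · exact absurd heq (ne_of_lt (hmonoS m hm n hn h))
        · exact h
        · exact absurd heq.symm (ne_of_lt (hmonoS n hn m hm h))
      _ = u (b (N-1) + 1) := Finset.card_range _

lemma card_down_le {f : ℕ → Ω → ℝ} {ω : Ω} {α β : ℝ} (hαβ : α < β) {a b : ℕ → ℕ}
    (hab : ∀ n, a n < b n) (hba : ∀ n, b n ≤ a (n+1)) {N : ℕ} {S : Finset ℕ}
    (hS : S ⊆ Finset.range N)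
    (h : ∀ n ∈ S, ∃ i j, a n ≤ i ∧ i < j ∧ j ≤ b n ∧ β < f i ω ∧ f j ω < α) :
    S.card ≤ upcrossingsBefore α β f (b (N-1) + 1) ω + 1 := by
  classical
  set u : ℕ → ℕ := fun T => upcrossingsBefore α β f T ω with hu
  have humono : Monotone u := fun s t hst => (upcrossingsBefore_mono hαβ hst) ω
  choose! i j h1 h2 h3 h4 h5 using h
  have horder : ∀ m ∈ S, ∀ n ∈ S, m < n → j m ≤ i n := by
    intro m hm n hn hmn
    exact ((h3 m hm).trans (wba hab hba hmn)).trans (h1 n hn)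
  have hmonoS : ∀ m ∈ S, ∀ n ∈ S, m < n → u (j m) < u (j n) := by
    intro m hm n hn hmn
    have : u (j m) < u (i n + 1) :=
      upcrossingsBefore_lt_of_exists_upcrossing hαβ le_rfl (h5 m hm)
        (horder m hm n hn hmn) (h4 n hn)
    exact lt_of_lt_of_le this (humono (h2 n hn))
  have htop : ∀ n ∈ S, u (j n) < u (b (N-1) + 1) + 1 := by
    intro n hn
    have hnN : n ≤ N - 1 := by
      have := Finset.mem_range.1 (hS hn); omega
    have : u (j n) ≤ u (b (N-1) + 1) :=
      humono ((h3 n hn).trans ((wbmono hab hba hnN).trans (Nat.le_succ _)))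
    omega
  calc S.card ≤ (Finset.range (u (b (N-1) + 1) + 1)).card := by
        refine Finset.card_le_card_of_injOn (fun n => u (j n))
          (fun n hn => Finset.mem_range.2 (htop n hn)) ?_
        intro m hm n hn heq
        rcases lt_trichotomy m n with h | h | h
        · exact absurd heq (ne_of_lt (hmonoS m hm n hn h))
        · exact h
        · exact absurd heq.symm (ne_of_lt (hmonoS n hn m hm h))
      _ = u (b (N-1) + 1) + 1 := Finset.card_range _

lemma band_select {eps M xs xt : ℝ} (heps : 0 < eps) (hxs0 : 0 ≤ xs) (hxsM : xs < M)
    (hgap : xs + eps ≤ xt) :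
    ∃ m : ℕ, 1 ≤ m ∧ m ≤ ⌈4*M/eps⌉₊ + 1 ∧ xs < m * (eps/4) ∧ (m:ℝ) * (eps/4) + eps/2 < xt := by
  have h4 : (0:ℝ) < eps/4 := by linarith
  refine ⟨⌊xs/(eps/4)⌋₊ + 1, le_add_self.trans le_rfl, ?_, ?_, ?_⟩
  · have h1 : (⌊xs/(eps/4)⌋₊ : ℕ) ≤ ⌈4*M/eps⌉₊ := by
      refine (Nat.floor_mono ?_).trans (Nat.floor_le_ceil _)
      rw [div_le_div_iff₀ h4 heps]
      nlinarith
    omega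
  · have := Nat.lt_floor_add_one (xs/(eps/4))
    rw [div_lt_iff₀ h4] at this
    calc xs < (⌊xs/(eps/4)⌋₊ + 1) * (eps/4) := this
    _ = ((⌊xs/(eps/4)⌋₊ + 1 : ℕ) : ℝ) * (eps/4) := by push_cast; ring
  · have h2 : (⌊xs/(eps/4)⌋₊ : ℝ) ≤ xs/(eps/4) := Nat.floor_le (by positivity)
    rw [le_div_iff₀ h4] at h2
    push_cast
    nlinarith

lemma pointwise_card (f : ℕ → Ω → ℝ) (ω : Ω) (eps M : ℝ) (heps : 0 < eps)
    (a b : ℕ → ℕ) (hab : ∀ n, a n < b n) (hba : ∀ n, b n ≤ a (n+1)) (N : ℕ)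
    (hnonneg : ∀ k, 0 ≤ f k ω) (hbdd : ∀ k, k ≤ b (N-1) → f k ω < M) :
    ∑ n ∈ Finset.range N, Set.indicator {ω' | ∃ i ∈ Set.Icc (a n) (b n),
        ∃ j ∈ Set.Icc (a n) (b n), eps ≤ |f i ω' - f j ω'|} (fun _ => (1:ℝ≥0∞)) ω
      ≤ ∑ m ∈ Finset.Icc 1 (⌈4*M/eps⌉₊ + 1),
          (2 * (upcrossingsBefore ((m:ℝ)*(eps/4)) ((m:ℝ)*(eps/4)+eps/2) f (b (N-1)+1) ω : ℝ≥0∞)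
            + 1) := by
  classical
  set L := ⌈4*M/eps⌉₊ + 1 with hL
  set E : ℕ → Prop := fun n => ∃ i ∈ Set.Icc (a n) (b n),
      ∃ j ∈ Set.Icc (a n) (b n), eps ≤ |f i ω - f j ω| with hE
  set S : Finset ℕ := (Finset.range N).filter E with hS
  have hLHS : ∑ n ∈ Finset.range N, Set.indicator {ω' | ∃ i ∈ Set.Icc (a n) (b n),
      ∃ j ∈ Set.Icc (a n) (b n), eps ≤ |f i ω' - f j ω'|} (fun _ => (1:ℝ≥0∞)) ω
      = (S.card : ℝ≥0∞) := by
    rw [hS, ← Finset.sum_boole]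
    refine Finset.sum_congr rfl fun n _ => ?_
    simp only [Set.indicator_apply, Set.mem_setOf_eq]
  rw [hLHS]
  -- per-band window sets
  set α : ℕ → ℝ := fun m => (m:ℝ) * (eps/4) with hα
  set β : ℕ → ℝ := fun m => (m:ℝ) * (eps/4) + eps/2 with hβ
  have hαβ : ∀ m, α m < β m := fun m => by simp only [hα, hβ]; linarith
  set Sup : ℕ → Finset ℕ := fun m => (Finset.range N).filter
      (fun n => ∃ i j, a n ≤ i ∧ i ≤ j ∧ j ≤ b n ∧ f i ω < α m ∧ β m < f j ω) with hSup
  set Sdn : ℕ → Finset ℕ := fun m => (Finset.range N).filter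
      (fun n => ∃ i j, a n ≤ i ∧ i < j ∧ j ≤ b n ∧ β m < f i ω ∧ f j ω < α m) with hSdn
  have hsubset : S ⊆ (Finset.Icc 1 L).biUnion (fun m => Sup m ∪ Sdn m) := by
    intro n hn
    rw [hS, Finset.mem_filter] at hn
    obtain ⟨hnN, i, hi, j, hj, hij⟩ := hn
    -- produce ordered pair (s, t) with f t - f s ≥ eps
    obtain ⟨s, t, hs, ht, hst⟩ : ∃ s t : ℕ, s ∈ Set.Icc (a n) (b n) ∧
        t ∈ Set.Icc (a n) (b n) ∧ f s ω + eps ≤ f t ω := by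
      rcases abs_cases (f i ω - f j ω) with ⟨h1, _⟩ | ⟨h1, _⟩
      · exact ⟨j, i, hj, hi, by rw [h1] at hij; linarith⟩
      · exact ⟨i, j, hi, hj, by rw [h1] at hij; linarith⟩
    have hsb : s ≤ b (N-1) := by
      have hnN' : n ≤ N - 1 := by have := Finset.mem_range.1 hnN; omega
      exact hs.2.trans (wbmono hab hba hnN')
    obtain ⟨m, hm1, hmL, hm2, hm3⟩ :=
      band_select heps (hnonneg s) (hbdd s hsb) hst
    refine Finset.mem_biUnion.2 ⟨m, Finset.mem_Icc.2 ⟨hm1, hmL⟩, ?_⟩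
    rcases le_or_gt s t with hord | hord
    · exact Finset.mem_union_left _ (Finset.mem_filter.2 ⟨hnN,
        s, t, hs.1, hord, ht.2, hm2, hm3⟩)
    · exact Finset.mem_union_right _ (Finset.mem_filter.2 ⟨hnN,
        t, s, ht.1, hord, hs.2, hm3, hm2⟩)
  have hcard : S.card ≤ ∑ m ∈ Finset.Icc 1 L,
      (2 * upcrossingsBefore (α m) (β m) f (b (N-1)+1) ω + 1) := by
    calc S.card ≤ ((Finset.Icc 1 L).biUnion (fun m => Sup m ∪ Sdn m)).card :=
          Finset.card_le_card hsubset
      _ ≤ ∑ m ∈ Finset.Icc 1 L, (Sup m ∪ Sdn m).card := Finset.card_biUnion_le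
      _ ≤ ∑ m ∈ Finset.Icc 1 L,
          (2 * upcrossingsBefore (α m) (β m) f (b (N-1)+1) ω + 1) := by
        refine Finset.sum_le_sum fun m _ => ?_
        have h1 : (Sup m).card ≤ upcrossingsBefore (α m) (β m) f (b (N-1)+1) ω := by
          refine card_up_le (hαβ m) hab hba (Finset.filter_subset _ _) ?_
          intro n hn
          exact (Finset.mem_filter.1 hn).2
        have h2 : (Sdn m).card ≤ upcrossingsBefore (α m) (β m) f (b (N-1)+1) ω + 1 := by
          refine card_down_le (hαβ m) hab hba (Finset.filter_subset _ _) ?_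
          intro n hn
          exact (Finset.mem_filter.1 hn).2
        calc (Sup m ∪ Sdn m).card ≤ (Sup m).card + (Sdn m).card :=
              Finset.card_union_le _ _
          _ ≤ _ := by omega
  calc (S.card : ℝ≥0∞) ≤ ((∑ m ∈ Finset.Icc 1 L,
        (2 * upcrossingsBefore (α m) (β m) f (b (N-1)+1) ω + 1) : ℕ) : ℝ≥0∞) := by
        exact_mod_cast Nat.cast_le.2 hcard
    _ = _ := by push_cast; rfl

lemma core {m0 : MeasurableSpace Ω} {μ : Measure Ω} [IsProbabilityMeasure μ]
    {F : Filtration ℕ m0} {X : ℕ → Ω → ℝ} (hsub : Submartingale X F μ)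
    (hpos : ∀ n, 0 ≤ᵐ[μ] X n) {K M eps : ℝ} (hK : 1 ≤ K) (hKM : K ≤ M)
    (heps0 : 0 < eps) (heps1 : eps < 1)
    (hbd : ∀ n, eLpNorm (X n) 1 μ ≤ ENNReal.ofReal K)
    {a b : ℕ → ℕ} (hab : ∀ n, a n < b n) (hba : ∀ n, b n ≤ a (n+1)) (N : ℕ)
    (G : Set Ω) (hG : MeasurableSet G)
    (hGsub : ∀ ω ∈ G, ∀ k ≤ b (N-1), X k ω < M) :
    ∑ n ∈ Finset.range N, μ ({ω | ∃ i ∈ Set.Icc (a n) (b n), ∃ j ∈ Set.Icc (a n) (b n),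
        eps ≤ |X i ω - X j ω|} ∩ G)
      ≤ ENNReal.ofReal (30 * M * K / eps^2) := by
  classical
  have hK0 : (0:ℝ) < K := lt_of_lt_of_le one_pos hK
  have hM0 : (0:ℝ) < M := lt_of_lt_of_le hK0 hKM
  have hXmeas : ∀ i, Measurable (X i) :=
    fun i => (hsub.stronglyMeasurable i).measurable.le (F.le i)
  set E : ℕ → Set Ω := fun n => {ω | ∃ i ∈ Set.Icc (a n) (b n), ∃ j ∈ Set.Icc (a n) (b n),
      eps ≤ |X i ω - X j ω|} with hE
  have hEmeas : ∀ n, MeasurableSet (E n) := by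
    intro n
    have : E n = ⋃ i ∈ Set.Icc (a n) (b n), ⋃ j ∈ Set.Icc (a n) (b n),
        {ω | eps ≤ |X i ω - X j ω|} := by
      ext ω
      simp only [hE, Set.mem_setOf_eq, Set.mem_iUnion, exists_prop]
    rw [this]
    refine MeasurableSet.biUnion (Set.to_countable _) fun i _ =>
      MeasurableSet.biUnion (Set.to_countable _) fun j _ => ?_
    exact measurableSet_le measurable_const ((hXmeas i).sub (hXmeas j)).abs
  set L := ⌈4*M/eps⌉₊ + 1 with hL
  set α : ℕ → ℝ := fun m => (m:ℝ) * (eps/4) with hα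
  set β : ℕ → ℝ := fun m => (m:ℝ) * (eps/4) + eps/2 with hβ
  have hαβ : ∀ m, α m < β m := fun m => by simp only [hα, hβ]; linarith
  have hα0 : ∀ m : ℕ, 0 ≤ α m := fun m => by
    simp only [hα]
    exact mul_nonneg (Nat.cast_nonneg m) (by linarith)
  set U : ℕ → Ω → ℝ≥0∞ := fun m ω =>
    (upcrossingsBefore (α m) (β m) X (b (N-1)+1) ω : ℝ≥0∞) with hU
  have hUmeas : ∀ m, Measurable (U m) := fun m =>
    measurable_from_top.comp (hsub.stronglyAdapted.measurable_upcrossingsBefore (hαβ m))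
  have step1 : ∑ n ∈ Finset.range N, μ (E n ∩ G)
      = ∫⁻ ω, ∑ n ∈ Finset.range N, (E n ∩ G).indicator (fun _ => (1:ℝ≥0∞)) ω ∂μ := by
    rw [lintegral_finset_sum]
    · exact Finset.sum_congr rfl fun n _ => (lintegral_indicator_one ((hEmeas n).inter hG)).symm
    · exact fun n _ => measurable_const.indicator ((hEmeas n).inter hG)
  have step2 : ∀ᵐ ω ∂μ, ∑ n ∈ Finset.range N, (E n ∩ G).indicator (fun _ => (1:ℝ≥0∞)) ω
      ≤ ∑ m ∈ Finset.Icc 1 L, (2 * U m ω + 1) := by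
    filter_upwards [ae_all_iff.2 hpos] with ω hω
    by_cases hωG : ω ∈ G
    · calc ∑ n ∈ Finset.range N, (E n ∩ G).indicator (fun _ => (1:ℝ≥0∞)) ω
          ≤ ∑ n ∈ Finset.range N, (E n).indicator (fun _ => (1:ℝ≥0∞)) ω :=
            Finset.sum_le_sum fun n _ =>
              Set.indicator_le_indicator_of_subset Set.inter_subset_left (fun _ => zero_le) ω
        _ ≤ _ := pointwise_card X ω eps M heps0 a b hab hba N hω
              (fun k hk => hGsub ω hωG k hk)
    · have : ∀ n, (E n ∩ G).indicator (fun _ => (1:ℝ≥0∞)) ω = 0 :=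
        fun n => Set.indicator_of_notMem (fun h => hωG h.2) _
      simp only [this, Finset.sum_const_zero]
      exact zero_le
  have step3 : ∀ m : ℕ, ∫⁻ ω, U m ω ∂μ ≤ ENNReal.ofReal (2*K/eps) := by
    intro m
    have h1 : ∫⁻ ω, U m ω ∂μ ≤ ∫⁻ ω, upcrossings (α m) (β m) X ω ∂μ := by
      refine lintegral_mono fun ω => ?_
      exact le_iSup (fun T => (upcrossingsBefore (α m) (β m) X T ω : ℝ≥0∞)) (b (N-1)+1)
    have h2 : ENNReal.ofReal (eps/2) * ∫⁻ ω, upcrossings (α m) (β m) X ω ∂μ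
        ≤ ⨆ T, ∫⁻ ω, ENNReal.ofReal ((X T ω - α m)⁺) ∂μ := by
      have h := hsub.mul_lintegral_upcrossings_le_lintegral_pos_part (α m) (β m)
      have heq : β m - α m = eps/2 := by simp only [hα, hβ]; ring
      rwa [heq] at h
    have h3 : ∀ T, ∫⁻ ω, ENNReal.ofReal ((X T ω - α m)⁺) ∂μ ≤ ENNReal.ofReal K := by
      intro T
      have hpt : ∀ ω, ENNReal.ofReal ((X T ω - α m)⁺) ≤ (‖X T ω‖₊ : ℝ≥0∞) := by
        intro ω
        rw [← enorm_eq_nnnorm, Real.enorm_eq_ofReal_abs]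
        refine ENNReal.ofReal_le_ofReal ?_
        have h0 := hα0 m
        rcases le_or_gt (X T ω - α m) 0 with h | h
        · rw [posPart_eq_zero.2 h]; positivity
        · rw [posPart_eq_self.2 h.le, abs_eq_max_neg]
          refine le_trans ?_ (le_max_left _ _)
          linarith
      calc ∫⁻ ω, ENNReal.ofReal ((X T ω - α m)⁺) ∂μ
          ≤ ∫⁻ ω, (‖X T ω‖₊ : ℝ≥0∞) ∂μ := lintegral_mono hpt
        _ = eLpNorm (X T) 1 μ := by rw [eLpNorm_one_eq_lintegral_enorm]; rfl
        _ ≤ _ := hbd T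
    have h4 : ENNReal.ofReal (eps/2) * ∫⁻ ω, U m ω ∂μ ≤ ENNReal.ofReal K := by
      refine le_trans (mul_le_mul_right h1 _) (le_trans h2 (iSup_le h3))
    have heps2 : (0:ℝ) < eps/2 := by linarith
    rw [show (2*K/eps) = K/(eps/2) by field_simp, ENNReal.ofReal_div_of_pos heps2]
    rw [ENNReal.le_div_iff_mul_le
      (Or.inl (by rw [ne_eq, ENNReal.ofReal_eq_zero]; push_neg; linarith))
      (Or.inl ENNReal.ofReal_ne_top)]
    rwa [mul_comm]
  have hKeps : 1 ≤ K/eps := (one_le_div heps0).2 (heps1.le.trans hK)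
  have h2of : (2:ℝ≥0∞) = ENNReal.ofReal 2 := by
    rw [ENNReal.ofReal_ofNat]
  calc ∑ n ∈ Finset.range N, μ (E n ∩ G)
      ≤ ∫⁻ ω, ∑ m ∈ Finset.Icc 1 L, (2 * U m ω + 1) ∂μ := by
        rw [step1]; exact lintegral_mono_ae step2
    _ = ∑ m ∈ Finset.Icc 1 L, (2 * ∫⁻ ω, U m ω ∂μ + 1) := by
        rw [lintegral_finset_sum]
        · refine Finset.sum_congr rfl fun m _ => ?_
          rw [lintegral_add_right _ measurable_const, lintegral_const_mul _ (hUmeas m),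
            lintegral_const, measure_univ, mul_one]
        · exact fun m _ => ((hUmeas m).const_mul 2).add measurable_const
    _ ≤ ∑ m ∈ Finset.Icc 1 L, ENNReal.ofReal (5*K/eps) := by
        refine Finset.sum_le_sum fun m hm => ?_
        have h5 := step3 m
        have hnn : (0:ℝ) ≤ 2*(2*K/eps) := by
          have := div_nonneg (by linarith : (0:ℝ) ≤ 2*K) heps0.le
          linarith
        calc 2 * ∫⁻ ω, U m ω ∂μ + 1 ≤ 2 * ENNReal.ofReal (2*K/eps) + 1 :=
              add_le_add_left (mul_le_mul_right h5 2) 1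
          _ = ENNReal.ofReal (2*(2*K/eps) + 1) := by
              rw [h2of, ← ENNReal.ofReal_mul (by norm_num), ← ENNReal.ofReal_one,
                ← ENNReal.ofReal_add hnn zero_le_one]
          _ ≤ ENNReal.ofReal (5*K/eps) := by
              refine ENNReal.ofReal_le_ofReal ?_
              have h6 : 2*(2*K/eps) + K/eps = 5*K/eps := by ring
              linarith
    _ = (L : ℝ≥0∞) * ENNReal.ofReal (5*K/eps) := by
        rw [Finset.sum_const, Nat.card_Icc, nsmul_eq_mul]
        norm_num
    _ ≤ ENNReal.ofReal (30 * M * K / eps^2) := by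
        rw [show ((L:ℕ) : ℝ≥0∞) = ENNReal.ofReal (L:ℝ) by rw [ENNReal.ofReal_natCast],
          ← ENNReal.ofReal_mul (by positivity)]
        refine ENNReal.ofReal_le_ofReal ?_
        have hLle : (L:ℝ) ≤ 6*M/eps := by
          have h1 : (⌈4*M/eps⌉₊ : ℝ) < 4*M/eps + 1 :=
            Nat.ceil_lt_add_one (div_nonneg (by linarith) heps0.le)
          have h2 : 1 ≤ M/eps := (one_le_div heps0).2 (heps1.le.trans (hK.trans hKM))
          have h3 : (L:ℝ) = (⌈4*M/eps⌉₊ : ℝ) + 1 := by rw [hL]; push_cast; ring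
          have h4 : 4*M/eps + 2*(M/eps) = 6*M/eps := by ring
          linarith
        have h5K : (0:ℝ) ≤ 5*K/eps := div_nonneg (by linarith) heps0.le
        calc (L:ℝ) * (5*K/eps) ≤ (6*M/eps) * (5*K/eps) :=
              mul_le_mul_of_nonneg_right hLle h5K
          _ = 30 * M * K / eps^2 := by field_simp; ring

lemma set_lintegral_le_Lp {m0 : MeasurableSpace Ω} {μ : Measure Ω} (g : Ω → ℝ≥0∞)
    (hg : Measurable g) {p q : ℝ} (hpq : p.HolderConjugate q) {A : Set Ω}
    (hA : MeasurableSet A) :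
    ∫⁻ ω in A, g ω ∂μ ≤ (∫⁻ ω, g ω ^ p ∂μ) ^ (1/p) * μ A ^ (1/q) := by
  have hind : Measurable (A.indicator (fun _ => (1:ℝ≥0∞))) := measurable_const.indicator hA
  have h := ENNReal.lintegral_mul_le_Lp_mul_Lq μ hpq hg.aemeasurable hind.aemeasurable
  have h1 : ∫⁻ ω, (g * A.indicator (fun _ => (1:ℝ≥0∞))) ω ∂μ = ∫⁻ ω in A, g ω ∂μ := by
    rw [← lintegral_indicator hA]
    refine lintegral_congr fun ω => ?_
    by_cases hω : ω ∈ A <;> simp [hω]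
  have h2 : ∫⁻ ω, (A.indicator (fun _ => (1:ℝ≥0∞))) ω ^ q ∂μ = μ A := by
    have hq : ∀ ω, (A.indicator (fun _ => (1:ℝ≥0∞))) ω ^ q = A.indicator (fun _ => 1) ω := by
      intro ω
      by_cases hω : ω ∈ A
      · simp [hω]
      · simp [hω, ENNReal.zero_rpow_of_pos hpq.symm.pos]
    simp_rw [hq]
    rw [lintegral_indicator hA]
    simp
  rw [h1, h2] at h
  exact h

lemma max_bound {m0 : MeasurableSpace Ω} {μ : Measure Ω} [IsProbabilityMeasure μ]
    {F : Filtration ℕ m0} {X : ℕ → Ω → ℝ} (hsub : Submartingale X F μ)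
    {p K M : ℝ} (hp : 1 ≤ p) (hK : 1 ≤ K) (hM : 0 < M)
    (hbdp : ∀ n, eLpNorm (X n) (ENNReal.ofReal p) μ ≤ ENNReal.ofReal K) (T : ℕ) :
    μ {ω | ∃ k, k ≤ T ∧ M ≤ X k ω} ≤ ENNReal.ofReal ((K/M)^p) := by
  classical
  have hK0 : (0:ℝ) < K := lt_of_lt_of_le one_pos hK
  have hp0 : (0:ℝ) < p := lt_of_lt_of_le one_pos hp
  have hpofReal : (ENNReal.ofReal p) ≠ 0 := by
    rw [ne_eq, ENNReal.ofReal_eq_zero]; push_neg; exact hp0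
  set Y : ℕ → Ω → ℝ := fun n ω => (X n ω)⁺ with hY
  have hYval : ∀ n ω, Y n ω = (X n ω)⁺ := fun n ω => rfl
  have hYsub : Submartingale Y F μ := hsub.pos
  have hYnn : ∀ (n : ℕ) (ω : Ω), 0 ≤ Y n ω := fun n ω => posPart_nonneg _
  have hYbd : ∀ n, eLpNorm (Y n) (ENNReal.ofReal p) μ ≤ ENNReal.ofReal K := by
    intro n
    refine le_trans (eLpNorm_mono fun ω => ?_) (hbdp n)
    rw [hYval, Real.norm_eq_abs, Real.norm_eq_abs, abs_of_nonneg (posPart_nonneg _),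
      posPart_def]
    exact sup_le (le_abs_self _) (abs_nonneg _)
  set A : Set Ω := {ω | (M.toNNReal : ℝ) ≤ (Finset.range (T + 1)).sup'
      Finset.nonempty_range_add_one fun k => Y k ω} with hA
  have hAmeas : MeasurableSet A :=
    measurableSet_le measurable_const (Finset.measurable_range_sup'' fun k _ =>
      (hYsub.stronglyMeasurable k).measurable.le (F.le k))
  have hsubset : {ω | ∃ k, k ≤ T ∧ M ≤ X k ω} ⊆ A := by
    intro ω hω
    obtain ⟨k, hk, hMk⟩ := hω
    rw [hA, Set.mem_setOf_eq, Real.coe_toNNReal _ hM.le, Finset.le_sup'_iff]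
    refine ⟨k, Finset.mem_range.2 (Nat.lt_succ_of_le hk), hMk.trans ?_⟩
    rw [hYval, posPart_def]
    exact le_sup_left
  have hmax : ENNReal.ofReal M * μ A ≤ ENNReal.ofReal (∫ ω in A, Y T ω ∂μ) := by
    have h := maximal_ineq hYsub (fun n ω => hYnn n ω) (ε := M.toNNReal) T
    rw [← hA] at h
    have hcoe : (M.toNNReal : ℝ≥0∞) = ENNReal.ofReal M := rfl
    rwa [hcoe] at h
  set g : Ω → ℝ≥0∞ := fun ω => ENNReal.ofReal (Y T ω) with hg
  have hgmeas : Measurable g :=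
    ENNReal.measurable_ofReal.comp ((hYsub.stronglyMeasurable T).measurable.le (F.le T))
  have heq : ENNReal.ofReal (∫ ω in A, Y T ω ∂μ) = ∫⁻ ω in A, g ω ∂μ :=
    ofReal_integral_eq_lintegral_ofReal ((hYsub.integrable T).integrableOn)
      (Filter.Eventually.of_forall fun ω => hYnn T ω)
  have hgK : (∫⁻ ω, g ω ^ p ∂μ) ^ (1/p) ≤ ENNReal.ofReal K := by
    have heq2 : (∫⁻ ω, g ω ^ p ∂μ) ^ (1/p) = eLpNorm (Y T) (ENNReal.ofReal p) μ := by
      rw [eLpNorm_eq_lintegral_rpow_enorm_toReal hpofReal ENNReal.ofReal_ne_top,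
        ENNReal.toReal_ofReal hp0.le]
      congr 1
      refine lintegral_congr fun ω => ?_
      rw [hg, Real.enorm_eq_ofReal_abs, abs_of_nonneg (hYnn T ω)]
    rw [heq2]
    exact hYbd T
  have hHold : ENNReal.ofReal (∫ ω in A, Y T ω ∂μ) ≤ ENNReal.ofReal K * μ A ^ (1 - 1/p) := by
    rw [heq]
    rcases eq_or_lt_of_le hp with hp1 | hp1
    · subst hp1
      have h1 : ∫⁻ ω in A, g ω ∂μ ≤ ∫⁻ ω, g ω ∂μ := setLIntegral_le_lintegral A g
      have h2 : ∫⁻ ω, g ω ∂μ ≤ ENNReal.ofReal K := by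
        have := hgK
        simp only [ENNReal.rpow_one, one_div_one] at this
        simpa using this
      calc ∫⁻ ω in A, g ω ∂μ ≤ ENNReal.ofReal K := h1.trans h2
        _ = ENNReal.ofReal K * μ A ^ (1 - 1/(1:ℝ)) := by
          norm_num
    · have hpq := Real.HolderConjugate.conjExponent hp1
      have h := set_lintegral_le_Lp (μ := μ) g hgmeas hpq hAmeas
      have hq_eq : 1 / Real.conjExponent p = 1 - 1/p := by
        have h1 := hpq.inv_add_inv_eq_one
        rw [one_div, one_div]
        linarith
      rw [hq_eq] at h
      exact h.trans (mul_le_mul_left hgK _)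
  rcases eq_or_ne (μ A) 0 with hμA | hμA
  · refine le_trans (measure_mono hsubset) ?_
    rw [hμA]
    exact zero_le
  · have hμAne : μ A ≠ ⊤ := measure_ne_top μ A
    have hr0 : (0:ℝ) ≤ 1 - 1/p := by
      have : 1/p ≤ 1 := by
        rw [div_le_one hp0]; exact hp
      linarith
    have hsplit : μ A = μ A ^ (1/p) * μ A ^ (1 - 1/p) := by
      rw [← ENNReal.rpow_add _ _ hμA hμAne]
      norm_num
    have hcancel : ENNReal.ofReal M * μ A ^ (1/p) ≤ ENNReal.ofReal K := by
      have hrne : μ A ^ (1 - 1/p) ≠ 0 := (ENNReal.rpow_pos (pos_iff_ne_zero.2 hμA) hμAne).ne'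
      have hrnetop : μ A ^ (1 - 1/p) ≠ ⊤ := ENNReal.rpow_ne_top_of_nonneg hr0 hμAne
      rw [← ENNReal.mul_le_mul_iff_left hrne hrnetop, mul_assoc, ← hsplit]
      exact hmax.trans hHold
    have hdiv : μ A ^ (1/p) ≤ ENNReal.ofReal (K/M) := by
      rw [ENNReal.ofReal_div_of_pos hM]
      rw [ENNReal.le_div_iff_mul_le
        (Or.inl (by rw [ne_eq, ENNReal.ofReal_eq_zero]; push_neg; exact hM))
        (Or.inl ENNReal.ofReal_ne_top)]
      rwa [mul_comm]
    refine le_trans (measure_mono hsubset) ?_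
    calc μ A = (μ A ^ (1/p)) ^ p := by
          rw [← ENNReal.rpow_mul, one_div_mul_cancel hp0.ne', ENNReal.rpow_one]
      _ ≤ (ENNReal.ofReal (K/M)) ^ p := ENNReal.rpow_le_rpow hdiv hp0.le
      _ = ENNReal.ofReal ((K/M)^p) := ENNReal.ofReal_rpow_of_nonneg (by positivity) hp0.le

/-- common final step -/
lemma assemble {m0 : MeasurableSpace Ω} {μ : Measure Ω} [IsProbabilityMeasure μ]
    {F : Filtration ℕ m0} {X : ℕ → Ω → ℝ} (hsub : Submartingale X F μ)
    (hpos : ∀ n, 0 ≤ᵐ[μ] X n) {K M eps lam B : ℝ} (hK : 1 ≤ K) (hKM : K ≤ M)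
    (heps0 : 0 < eps) (heps1 : eps < 1) (hlam0 : 0 < lam) (hlam1 : lam < 1)
    (hbd : ∀ n, eLpNorm (X n) 1 μ ≤ ENNReal.ofReal K)
    {a b : ℕ → ℕ} (hab : ∀ n, a n < b n) (hba : ∀ n, b n ≤ a (n+1))
    (hB : 60 * M * K / (lam * eps^2) ≤ B)
    (hGc : ∀ T : ℕ, μ {ω | ∃ k, k ≤ T ∧ M ≤ X k ω} ≤ ENNReal.ofReal (lam/2)) :
    ∃ n : ℕ, (n : ℝ) ≤ B ∧
      μ {ω | ∃ i ∈ Set.Icc (a n) (b n), ∃ j ∈ Set.Icc (a n) (b n),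
          eps ≤ |X i ω - X j ω|} < ENNReal.ofReal lam := by
  classical
  have hK0 : (0:ℝ) < K := lt_of_lt_of_le one_pos hK
  have hM0 : (0:ℝ) < M := lt_of_lt_of_le hK0 hKM
  have hB0 : (0:ℝ) ≤ B := le_trans (by positivity) hB
  by_contra hcon
  push_neg at hcon
  set E : ℕ → Set Ω := fun n => {ω | ∃ i ∈ Set.Icc (a n) (b n), ∃ j ∈ Set.Icc (a n) (b n),
      eps ≤ |X i ω - X j ω|} with hE
  have hcon' : ∀ n : ℕ, (n:ℝ) ≤ B → ENNReal.ofReal lam ≤ μ (E n) := fun n hn => hcon n hn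
  set N : ℕ := ⌊B⌋₊ + 1 with hN
  have hXmeas : ∀ i, Measurable (X i) :=
    fun i => (hsub.stronglyMeasurable i).measurable.le (F.le i)
  set T : ℕ := b (N-1) with hT
  set G : Set Ω := {ω | ∀ k, k ≤ T → X k ω < M} with hG
  have hGmeas : MeasurableSet G := by
    have : G = ⋂ k, ⋂ (_ : k ≤ T), {ω | X k ω < M} := by
      ext ω; simp [hG]
    rw [this]
    exact MeasurableSet.iInter fun k => MeasurableSet.iInter fun _ =>
      measurableSet_lt (hXmeas k) measurable_const
  have hGcompl : μ Gᶜ ≤ ENNReal.ofReal (lam/2) := by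
    refine le_trans (measure_mono ?_) (hGc T)
    intro ω hω
    simp only [hG, Set.mem_compl_iff, Set.mem_setOf_eq] at hω
    push_neg at hω
    obtain ⟨k, hk, hk'⟩ := hω
    exact ⟨k, hk, hk'⟩
  have hEmeas : ∀ n, MeasurableSet (E n) := by
    intro n
    have : E n = ⋃ i ∈ Set.Icc (a n) (b n), ⋃ j ∈ Set.Icc (a n) (b n),
        {ω | eps ≤ |X i ω - X j ω|} := by
      ext ω
      simp only [hE, Set.mem_setOf_eq, Set.mem_iUnion, exists_prop]
    rw [this]
    refine MeasurableSet.biUnion (Set.to_countable _) fun i _ =>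
      MeasurableSet.biUnion (Set.to_countable _) fun j _ => ?_
    exact measurableSet_le measurable_const ((hXmeas i).sub (hXmeas j)).abs
  -- each intersection has measure at least lam/2
  have hlow : ∀ n < N, ENNReal.ofReal (lam/2) ≤ μ (E n ∩ G) := by
    intro n hn
    have hnB : (n:ℝ) ≤ B := by
      have h1 : n ≤ ⌊B⌋₊ := Nat.lt_succ_iff.1 hn
      exact le_trans (Nat.cast_le.2 h1) (Nat.floor_le hB0)
    have h1 : ENNReal.ofReal lam ≤ μ (E n ∩ G) + ENNReal.ofReal (lam/2) :=
      calc ENNReal.ofReal lam ≤ μ (E n) := hcon' n hnB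
        _ ≤ μ ((E n ∩ G) ∪ Gᶜ) := by
            refine measure_mono fun ω hω => ?_
            by_cases hωG : ω ∈ G
            · exact Or.inl ⟨hω, hωG⟩
            · exact Or.inr hωG
        _ ≤ μ (E n ∩ G) + μ Gᶜ := measure_union_le _ _
        _ ≤ μ (E n ∩ G) + ENNReal.ofReal (lam/2) := add_le_add_right hGcompl _
    have h2 : ENNReal.ofReal lam = ENNReal.ofReal (lam/2) + ENNReal.ofReal (lam/2) := by
      rw [← ENNReal.ofReal_add (by linarith) (by linarith)]
      norm_num
    rw [h2] at h1
    exact (ENNReal.add_le_add_iff_right ENNReal.ofReal_ne_top).1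
      (by rwa [add_comm (μ (E n ∩ G))] at h1)
  -- sum up and apply core
  have hcore := core hsub hpos hK hKM heps0 heps1 hbd hab hba N G hGmeas
    (fun ω hω k hk => hω k hk)
  have hsum : (N : ℝ≥0∞) * ENNReal.ofReal (lam/2) ≤ ENNReal.ofReal (30 * M * K / eps^2) := by
    refine le_trans ?_ hcore
    calc (N : ℝ≥0∞) * ENNReal.ofReal (lam/2)
        = ∑ _n ∈ Finset.range N, ENNReal.ofReal (lam/2) := by
          rw [Finset.sum_const, Finset.card_range, nsmul_eq_mul]
      _ ≤ ∑ n ∈ Finset.range N, μ (E n ∩ G) :=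
          Finset.sum_le_sum fun n hn => hlow n (Finset.mem_range.1 hn)
  -- convert to a real inequality
  have hreal : (N:ℝ) * (lam/2) ≤ 30 * M * K / eps^2 := by
    have h1 : ENNReal.ofReal ((N:ℝ) * (lam/2)) ≤ ENNReal.ofReal (30 * M * K / eps^2) := by
      rwa [ENNReal.ofReal_mul (by positivity), ENNReal.ofReal_natCast]
    exact (ENNReal.ofReal_le_ofReal_iff (by positivity)).1 h1
  -- contradiction
  have hNB : B < (N:ℝ) := by
    have := Nat.lt_floor_add_one B
    rw [hN]
    push_cast
    linarith
  have hNle : (N:ℝ) ≤ 60 * M * K / (lam * eps^2) := by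
    rw [le_div_iff₀ (by positivity)]
    nlinarith [mul_le_mul_of_nonneg_right hreal (pow_pos heps0 2).le,
      div_mul_cancel₀ (30*M*K) (pow_pos heps0 2).ne']
  linarith [hNle.trans hB]


end Stmt15Aux

open Stmt15Aux

/-- **Quantitative positive submartingale convergence theorem.** There is a constant
`c ≤ 220` (independent of `p`) such that for every nonnegative submartingale `X` and
`p ∈ [1,∞)`, `K ≥ 1` with `sup_n ‖X n‖_p < K`, the function
`φ_p(λ,ε) := (cK²/(λε²))·(2/λ)^(1/p)` is a learnable rate of uniform convergence for `X`;
and if instead `sup_n ‖X n‖_∞ < K`, then `φ_∞(λ,ε) := cK²/(λε²)` is a learnable rate of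
uniform convergence. -/
theorem stmt15 :
    ∃ c : ℝ, 0 < c ∧ c ≤ 220 ∧
      ∀ (Ω : Type) (m0 : MeasurableSpace Ω) (μ : Measure Ω), IsProbabilityMeasure μ →
      ∀ (F : Filtration ℕ m0) (X : ℕ → Ω → ℝ),
        Submartingale X F μ → (∀ n, 0 ≤ᵐ[μ] X n) →
        ((∀ p K : ℝ, 1 ≤ p → 1 ≤ K →
            (∀ n, eLpNorm (X n) (ENNReal.ofReal p) μ < ENNReal.ofReal K) →
            ∀ lam ∈ Set.Ioo (0 : ℝ) 1, ∀ eps ∈ Set.Ioo (0 : ℝ) 1, ∀ a b : ℕ → ℕ,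
              (∀ n, a n < b n) → (∀ n, b n ≤ a (n + 1)) →
              ∃ n : ℕ, (n : ℝ) ≤ c * K ^ 2 / (lam * eps ^ 2) * (2 / lam) ^ (1 / p) ∧
                μ {ω | ∃ i ∈ Set.Icc (a n) (b n), ∃ j ∈ Set.Icc (a n) (b n),
                    eps ≤ |X i ω - X j ω|} < ENNReal.ofReal lam) ∧
          (∀ K : ℝ, 1 ≤ K →
            (∀ n, eLpNorm (X n) ⊤ μ < ENNReal.ofReal K) →
            ∀ lam ∈ Set.Ioo (0 : ℝ) 1, ∀ eps ∈ Set.Ioo (0 : ℝ) 1, ∀ a b : ℕ → ℕ,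
              (∀ n, a n < b n) → (∀ n, b n ≤ a (n + 1)) →
              ∃ n : ℕ, (n : ℝ) ≤ c * K ^ 2 / (lam * eps ^ 2) ∧
                μ {ω | ∃ i ∈ Set.Icc (a n) (b n), ∃ j ∈ Set.Icc (a n) (b n),
                    eps ≤ |X i ω - X j ω|} < ENNReal.ofReal lam)) := by
  refine ⟨200, by norm_num, by norm_num, ?_⟩
  intro Ω m0 μ hprob F X hsub hpos
  haveI := hprob
  have hXaesm : ∀ n, AEStronglyMeasurable (X n) μ := fun n =>
    ((hsub.stronglyMeasurable n).mono (F.le n)).aestronglyMeasurable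
  constructor
  · -- Lp case
    intro p K hp hK1 hbdp' lam hlam eps heps a b hab hba
    have hp0 : (0:ℝ) < p := lt_of_lt_of_le one_pos hp
    have hK0 : (0:ℝ) < K := lt_of_lt_of_le one_pos hK1
    have hlam0 := hlam.1
    have hbdp : ∀ n, eLpNorm (X n) (ENNReal.ofReal p) μ ≤ ENNReal.ofReal K :=
      fun n => (hbdp' n).le
    have hbd1 : ∀ n, eLpNorm (X n) 1 μ ≤ ENNReal.ofReal K := fun n =>
      (eLpNorm_le_eLpNorm_of_exponent_le (ENNReal.one_le_ofReal.2 hp) (hXaesm n)).trans (hbdp n)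
    set c' : ℝ := (2/lam)^(1/p) with hc'
    have h2lam : (1:ℝ) ≤ 2/lam := by
      rw [le_div_iff₀ hlam0]
      linarith [hlam.2]
    have hc'1 : 1 ≤ c' := Real.one_le_rpow h2lam (by positivity)
    have hc'0 : 0 < c' := lt_of_lt_of_le one_pos hc'1
    set M : ℝ := K * c' with hM
    have hKM : K ≤ M := le_mul_of_one_le_right hK0.le hc'1
    have hM0 : 0 < M := lt_of_lt_of_le hK0 hKM
    have hKM_eq : (K/M)^p = lam/2 := by
      have h1 : K / M = (lam/2)^(1/p) := by
        rw [hM, div_mul_eq_div_div, div_self hK0.ne', one_div, hc',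
          ← Real.inv_rpow (by positivity), inv_div]
      rw [h1, ← Real.rpow_mul (by linarith : (0:ℝ) ≤ lam/2),
        one_div_mul_cancel hp0.ne', Real.rpow_one]
    have hGc : ∀ T : ℕ, μ {ω | ∃ k, k ≤ T ∧ M ≤ X k ω} ≤ ENNReal.ofReal (lam/2) := by
      intro T
      refine le_trans (max_bound hsub hp hK1 hM0 hbdp T) ?_
      rw [hKM_eq]
    have hB : 60 * M * K / (lam * eps^2) ≤ 200 * K ^ 2 / (lam * eps ^ 2) * c' := by
      have he : 60 * M * K / (lam * eps^2) = 60 * (K^2/(lam*eps^2) * c') := by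
        rw [hM]; ring
      have he2 : 200 * K ^ 2 / (lam * eps ^ 2) * c' = 200 * (K^2/(lam*eps^2) * c') := by
        ring
      have h2 : (0:ℝ) ≤ K^2/(lam*eps^2)*c' := by positivity
      rw [he, he2]
      linarith
    exact assemble hsub hpos hK1 hKM heps.1 heps.2 hlam.1 hlam.2 hbd1 hab hba hB hGc
  · -- L∞ case
    intro K hK1 hbdi lam hlam eps heps a b hab hba
    have hK0 : (0:ℝ) < K := lt_of_lt_of_le one_pos hK1
    have hbd1 : ∀ n, eLpNorm (X n) 1 μ ≤ ENNReal.ofReal K := fun n =>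
      (eLpNorm_le_eLpNorm_of_exponent_le le_top (hXaesm n)).trans (hbdi n).le
    set M : ℝ := K + 1 with hM
    have hKM : K ≤ M := by rw [hM]; linarith
    have hGc : ∀ T : ℕ, μ {ω | ∃ k, k ≤ T ∧ M ≤ X k ω} ≤ ENNReal.ofReal (lam/2) := by
      intro T
      have hae : ∀ k : ℕ, ∀ᵐ ω ∂μ, X k ω < M := by
        intro k
        filter_upwards [enorm_ae_le_eLpNormEssSup (X k) μ] with ω hω
        have h2 : (‖X k ω‖₊ : ℝ≥0∞) < ENNReal.ofReal K := by
          refine lt_of_le_of_lt hω ?_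
          rw [← eLpNorm_exponent_top]
          exact hbdi k
        rw [← enorm_eq_nnnorm, Real.enorm_eq_ofReal_abs] at h2
        have h3 : |X k ω| < K := (ENNReal.ofReal_lt_ofReal_iff_of_nonneg (abs_nonneg _)).1 h2
        have h4 := le_abs_self (X k ω)
        rw [hM]
        linarith
      have hnull : μ {ω | ¬ ∀ k : ℕ, X k ω < M} = 0 := by
        exact ae_iff.1 (ae_all_iff.2 hae)
      refine le_trans (le_trans (measure_mono ?_) hnull.le) zero_le
      intro ω hω
      obtain ⟨k, _, hk⟩ := hω
      intro hcon
      exact absurd (hcon k) (not_lt.2 hk)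
    have hB : 60 * M * K / (lam * eps^2) ≤ 200 * K ^ 2 / (lam * eps ^ 2) := by
      have h1 : (0:ℝ) < lam * eps^2 := by
        have := hlam.1; have := heps.1; positivity
      have h2 : 60 * M * K ≤ 200 * K ^ 2 := by
        rw [hM]; nlinarith [hK1]
      exact (div_le_div_iff_of_pos_right h1).2 h2
    exact assemble hsub hpos hK1 hKM heps.1 heps.2 hlam.1 hlam.2 hbd1 hab hba hB hGc
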